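/- Let p be a design on N units, N divisible by 4, with π_i = 1/2 for all i and Σ_i w_i = N/2 for every w ∈ 𝒲, and let G assign to each w ∈ 𝒲 a nonempty finite set G(w) of substitutes of w. Suppose in addition that the support is closed under label switching (w ∈ 𝒲 if and only if 1 − w ∈ 𝒲) and that each G(w) is closed under label switching (w̃ ∈ G(w) if and only if 1 − w̃ ∈ G(w)). Then the contrast variance estimator is conservative: E[V̂_sub(W)] ≥ Var(τ̂), and moreover V̂_sub(W) ≥ 0 for every W ∈ 𝒲. -/

import Mathlib

open Finset
open scoped Classical

noncomputable section

/-- Propensity score `π_i = Pr(W_i = 1)` of a design `p` on `N` units. -/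
def piS (N : ℕ) (p : (Fin N → Bool) → ℝ) (i : Fin N) : ℝ :=
  ∑ w : Fin N → Bool, if w i then p w else 0

/-- Expectation under the design. -/
def expct (N : ℕ) (p f : (Fin N → Bool) → ℝ) : ℝ :=
  ∑ w : Fin N → Bool, p w * f w

/-- Average treatment effect. -/
def tauATE (N : ℕ) (Y1 Y0 : Fin N → ℝ) : ℝ :=
  (1 / (N : ℝ)) * ∑ i, (Y1 i - Y0 i)

/-- Observed outcome of unit `i` under assignment `w`. -/
def yObs (N : ℕ) (Y1 Y0 : Fin N → ℝ) (w : Fin N → Bool) (i : Fin N) : ℝ :=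
  if w i then Y1 i else Y0 i

/-- `l_i(w) = 1` if treated, `−1` if control. -/
def ell (N : ℕ) (w : Fin N → Bool) (i : Fin N) : ℝ :=
  if w i then 1 else -1

/-- The (difference-in-means / HT with `π_i = 1/2`) estimator
`τ̂(w) = (2/N)(Σ_{w_i=1} y_i(w) − Σ_{w_i=0} y_i(w))`. -/
def tauDM (N : ℕ) (Y1 Y0 : Fin N → ℝ) (w : Fin N → Bool) : ℝ :=
  (2 / (N : ℝ)) * ((∑ i, if w i then yObs N Y1 Y0 w i else 0)
    - ∑ i, if w i then 0 else yObs N Y1 Y0 w i)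

/-- Design-based variance of `τ̂`. -/
def varDM (N : ℕ) (p : (Fin N → Bool) → ℝ) (Y1 Y0 : Fin N → ℝ) : ℝ :=
  expct N p (fun w => (tauDM N Y1 Y0 w - tauATE N Y1 Y0) ^ 2)

/-- The treated set `T(w)`. -/
def Tset (N : ℕ) (w : Fin N → Bool) : Finset (Fin N) :=
  univ.filter fun i => w i = true

/-- The contrast variance estimator
`V̂_sub(W) = (4/N²)·Σ_{w ∈ 𝒲 : W ∈ G(w)} (p_w/p_W)·(1/|G(w)|)·(Σ_i l_i(w)·y_i(W))²`. -/
def Vsub (N : ℕ) (p : (Fin N → Bool) → ℝ) (Y1 Y0 : Fin N → ℝ)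
    (G : (Fin N → Bool) → Finset (Fin N → Bool)) (W : Fin N → Bool) : ℝ :=
  (4 / (N : ℝ) ^ 2) * ∑ w : Fin N → Bool,
    if 0 < p w ∧ W ∈ G w then
      (p w / p W) * (1 / ((G w).card : ℝ)) * (∑ i, ell N w i * yObs N Y1 Y0 W i) ^ 2
    else 0

/-- Contrast sum `S(w,W) = Σ_i l_i(w) y_i(W)`. -/
def Scon (N : ℕ) (Y1 Y0 : Fin N → ℝ) (w W : Fin N → Bool) : ℝ :=
  ∑ i, ell N w i * yObs N Y1 Y0 W i

/-- `C(w) = Σ_i l_i(w) (Y1_i + Y0_i)`. -/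
def Ccon (N : ℕ) (Y1 Y0 : Fin N → ℝ) (w : Fin N → Bool) : ℝ :=
  ∑ i, ell N w i * (Y1 i + Y0 i)

lemma pair_sum (N : ℕ) (Y1 Y0 : Fin N → ℝ) (w W : Fin N → Bool) :
    Scon N Y1 Y0 w W + Scon N Y1 Y0 w (fun i => ! W i) = Ccon N Y1 Y0 w := by
  unfold Scon Ccon
  rw [← Finset.sum_add_distrib]
  refine Finset.sum_congr rfl fun i _ => ?_
  cases h : W i <;> simp [yObs, h] <;> ring

lemma sum_sq_ge (N : ℕ) (Y1 Y0 : Fin N → ℝ) (w : Fin N → Bool)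
    (G : Finset (Fin N → Bool)) (hG : ∀ W, W ∈ G ↔ (fun i => ! W i) ∈ G) :
    (G.card : ℝ) * (Ccon N Y1 Y0 w / 2) ^ 2 ≤ ∑ W ∈ G, (Scon N Y1 Y0 w W) ^ 2 := by
  have hinv : ∑ W ∈ G, (Scon N Y1 Y0 w (fun i => ! W i)) ^ 2
      = ∑ W ∈ G, (Scon N Y1 Y0 w W) ^ 2 := by
    apply Finset.sum_nbij' (fun W => fun i => ! W i) (fun W => fun i => ! W i)
    · intro a ha; exact (hG a).1 ha
    · intro a ha; exact (hG a).1 ha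
    · intro a _; funext i; simp
    · intro a _; funext i; simp
    · intro a _; simp
  have h3 : ∀ W ∈ G, 2 * (Ccon N Y1 Y0 w / 2) ^ 2
      ≤ (Scon N Y1 Y0 w W) ^ 2 + (Scon N Y1 Y0 w (fun i => ! W i)) ^ 2 := by
    intro W _
    rw [← pair_sum N Y1 Y0 w W]
    nlinarith [sq_nonneg (Scon N Y1 Y0 w W - Scon N Y1 Y0 w (fun i => ! W i))]
  have h4 : ∑ W ∈ G, (2 * (Ccon N Y1 Y0 w / 2) ^ 2)
      ≤ ∑ W ∈ G, ((Scon N Y1 Y0 w W) ^ 2 + (Scon N Y1 Y0 w (fun i => ! W i)) ^ 2) :=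
    Finset.sum_le_sum h3
  rw [Finset.sum_add_distrib, hinv, Finset.sum_const, nsmul_eq_mul] at h4
  linarith

lemma tau_diff (N : ℕ) (Y1 Y0 : Fin N → ℝ) (w : Fin N → Bool) :
    tauDM N Y1 Y0 w - tauATE N Y1 Y0 = (1 / (N : ℝ)) * Ccon N Y1 Y0 w := by
  unfold tauDM tauATE
  have h : Ccon N Y1 Y0 w
      = 2 * ((∑ i, if w i then yObs N Y1 Y0 w i else 0)
          - ∑ i, if w i then 0 else yObs N Y1 Y0 w i) - ∑ i, (Y1 i - Y0 i) := by
    have hpt : ∀ i, ell N w i * (Y1 i + Y0 i)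
        = 2 * ((if w i then yObs N Y1 Y0 w i else 0)
            - (if w i then 0 else yObs N Y1 Y0 w i)) - (Y1 i - Y0 i) := by
      intro i; cases h : w i <;> simp [ell, yObs, h] <;> ring
    unfold Ccon
    simp_rw [hpt]
    rw [Finset.sum_sub_distrib, ← Finset.mul_sum, Finset.sum_sub_distrib]
  rw [h]; ring


lemma cancel_aux (a c e d b : ℝ) (hb : b ≠ 0) :
    b * (a * (c / b * e * d)) = a * c * e * d := by
  field_simp

lemma calc_eq (pw C c Nr : ℝ) (hc : c ≠ 0) :
    pw * ((1 / Nr) * C) ^ 2 = (4 / Nr ^ 2) * pw * (1 / c) * (c * (C / 2) ^ 2) := by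
  rw [show (4 / Nr ^ 2) * pw * (1 / c) * (c * (C / 2) ^ 2)
      = (4 / Nr ^ 2) * pw * ((1 / c) * c) * (C / 2) ^ 2 from by ring,
    one_div_mul_cancel hc, mul_one]
  ring

/-- Theorem 1 (second part): if the support and the substitute sets are closed under
label switching, the contrast estimator is conservative, and it is non-negative on
the support. -/
theorem contrast_conservative_and_nonneg
    (N : ℕ) (hN4 : 4 ∣ N)
    (p : (Fin N → Bool) → ℝ) (hp : ∀ w, 0 ≤ p w)
    (hsum : ∑ w : Fin N → Bool, p w = 1)
    (hpi : ∀ i, piS N p i = 1 / 2)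
    (hsupp : ∀ w, 0 < p w → (Tset N w).card = N / 2)
    (hclosed : ∀ w : Fin N → Bool, 0 < p w ↔ 0 < p (fun i => ! w i))
    (G : (Fin N → Bool) → Finset (Fin N → Bool))
    (hGne : ∀ w, 0 < p w → (G w).Nonempty)
    (hGsub : ∀ w, 0 < p w → ∀ w' ∈ G w,
      0 < p w' ∧ (Tset N w' ∩ Tset N w).card = N / 4 ∧
        (Tset N w' ∩ (Tset N w)ᶜ).card = N / 4)
    (hGclosed : ∀ w, 0 < p w → ∀ w' : Fin N → Bool,
      w' ∈ G w ↔ (fun i => ! w' i) ∈ G w)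
    (Y1 Y0 : Fin N → ℝ) :
    varDM N p Y1 Y0 ≤ expct N p (Vsub N p Y1 Y0 G) ∧
      ∀ W : Fin N → Bool, 0 < p W → 0 ≤ Vsub N p Y1 Y0 G W := by
  have hVnn : ∀ W : Fin N → Bool, 0 < p W → 0 ≤ Vsub N p Y1 Y0 G W := by
    intro W _
    unfold Vsub
    apply mul_nonneg (by positivity)
    apply Finset.sum_nonneg
    intro w _
    split
    · exact mul_nonneg (mul_nonneg (div_nonneg (hp w) (hp W)) (one_div_nonneg.mpr (Nat.cast_nonneg _)))
        (sq_nonneg _)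
    · exact le_refl 0
  refine ⟨?_, hVnn⟩
  have step : ∀ W : Fin N → Bool, p W * Vsub N p Y1 Y0 G W
      = ∑ w : Fin N → Bool,
          (if 0 < p w ∧ W ∈ G w then
            (4 / (N : ℝ) ^ 2) * p w * (1 / ((G w).card : ℝ)) * (Scon N Y1 Y0 w W) ^ 2
          else 0) := by
    intro W
    unfold Vsub
    rw [Finset.mul_sum, Finset.mul_sum]
    refine Finset.sum_congr rfl fun w _ => ?_
    by_cases h : 0 < p w ∧ W ∈ G w
    · have hpW : 0 < p W := (hGsub w h.1 W h.2).1
      simp only [if_pos h]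
      exact cancel_aux _ _ _ _ _ hpW.ne'
    · simp [h]
  have hrw : expct N p (Vsub N p Y1 Y0 G) =
      ∑ w : Fin N → Bool, ∑ W : Fin N → Bool,
        (if 0 < p w ∧ W ∈ G w then
          (4 / (N : ℝ) ^ 2) * p w * (1 / ((G w).card : ℝ)) * (Scon N Y1 Y0 w W) ^ 2
        else 0) := by
    unfold expct
    simp_rw [step]
    exact Finset.sum_comm
  rw [hrw]
  unfold varDM expct
  simp_rw [tau_diff N Y1 Y0]
  apply Finset.sum_le_sum
  intro w _
  by_cases hw : 0 < p w
  · simp only [hw, true_and]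
    rw [Finset.sum_ite_mem, Finset.univ_inter, ← Finset.mul_sum]
    have hc : (0 : ℝ) < ((G w).card : ℝ) := by
      exact_mod_cast Finset.card_pos.mpr (hGne w hw)
    have key := sum_sq_ge N Y1 Y0 w (G w) (hGclosed w hw)
    have hnn : 0 ≤ (4 / (N : ℝ) ^ 2) * p w * (1 / ((G w).card : ℝ)) :=
      mul_nonneg (mul_nonneg (by positivity) (hp w)) (one_div_nonneg.mpr (Nat.cast_nonneg _))
    calc p w * ((1 / (N : ℝ)) * Ccon N Y1 Y0 w) ^ 2
        = (4 / (N : ℝ) ^ 2) * p w * (1 / ((G w).card : ℝ))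
            * (((G w).card : ℝ) * (Ccon N Y1 Y0 w / 2) ^ 2) :=
          calc_eq (p w) (Ccon N Y1 Y0 w) _ _ hc.ne'
      _ ≤ (4 / (N : ℝ) ^ 2) * p w * (1 / ((G w).card : ℝ))
            * ∑ W ∈ G w, (Scon N Y1 Y0 w W) ^ 2 :=
          mul_le_mul_of_nonneg_left key hnn
  · have hz : p w = 0 := le_antisymm (not_lt.mp hw) (hp w)
    simp [hz, hw]
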